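/- Let r be an n-dimensional weight and x ∈ ℝ^n. Suppose there exists c > 0 such that for all t > 0 and all nonzero integer vectors p = (p_1,...,p_n,q) ∈ ℤ^{n+1}, the sup-norm of a_r(t)V(x)p is at least c. Then there exists c' > 0 such that for all integer vectors (p_1,...,p_n,q) with q ≠ 0, max_{1≤i≤n} |q|^{r_i} |q x_i + p_i| ≥ c', i.e., x is r-badly approximable. -/
import Mathlib


/-- The diagonal flow `a_r(t) = diag(e^{r₁ t}, ..., e^{rₙ t}, e^{-t})`. -/
noncomputable def arMat (n : ℕ) (r : Fin n → ℝ) (t : ℝ) :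
    Matrix (Fin (n + 1)) (Fin (n + 1)) ℝ :=
  Matrix.diagonal fun i =>
    if h : (i : ℕ) < n then Real.exp (r ⟨i, h⟩ * t) else Real.exp (-t)

/-- The unipotent matrix `V(x) = [[Iₙ, x], [0, 1]]`. -/
def VMat (n : ℕ) (x : Fin n → ℝ) : Matrix (Fin (n + 1)) (Fin (n + 1)) ℝ :=
  Matrix.of fun i j =>
    if i = j then 1
    else if h : (i : ℕ) < n ∧ (j : ℕ) = n then x ⟨i, h.1⟩ else 0

lemma VMat_mulVec (n : ℕ) (x : Fin n → ℝ) (w : Fin (n+1) → ℝ) (i : Fin n) :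
    (VMat n x).mulVec w i.castSucc = w i.castSucc + x i * w (Fin.last n) := by
  unfold VMat Matrix.mulVec dotProduct
  rw [Fin.sum_univ_castSucc]
  have h1 : ∀ j : Fin n,
      (Matrix.of (fun i j : Fin (n+1) =>
        if i = j then (1:ℝ)
        else if h : (i : ℕ) < n ∧ (j : ℕ) = n then x ⟨i, h.1⟩ else 0))
        i.castSucc j.castSucc * w j.castSucc
      = (if i = j then (1:ℝ) else 0) * w j.castSucc := by
    intro j
    congr 1
    simp only [Matrix.of_apply]
    by_cases h : i = j
    · simp [h]
    · have : ¬ (i.castSucc = j.castSucc) := by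
        simpa [Fin.castSucc_inj] using h
      have hne : (j:ℕ) ≠ n := by have := j.isLt; omega
      simp only [Matrix.of_apply, if_neg this, if_neg h]
      rw [dif_neg]
      simp [hne]
  simp only [h1]
  have h2 : (Matrix.of (fun i j : Fin (n+1) =>
        if i = j then (1:ℝ)
        else if h : (i : ℕ) < n ∧ (j : ℕ) = n then x ⟨i, h.1⟩ else 0))
        i.castSucc (Fin.last n) * w (Fin.last n) = x i * w (Fin.last n) := by
    have hne : i.castSucc ≠ Fin.last n := by
      intro h; have := congrArg (Fin.val) h
      simp [Fin.coe_castSucc, Fin.val_last] at this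
      have := i.isLt; omega
    simp only [Matrix.of_apply, if_neg hne]
    rw [dif_pos ⟨by simpa using i.isLt, by simp⟩]
    congr 2
  rw [h2]
  congr 1
  simp [ite_mul]

lemma VMat_mulVec_last (n : ℕ) (x : Fin n → ℝ) (w : Fin (n+1) → ℝ) :
    (VMat n x).mulVec w (Fin.last n) = w (Fin.last n) := by
  unfold VMat Matrix.mulVec dotProduct
  rw [Fin.sum_univ_castSucc]
  have h1 : ∀ j : Fin n,
      (Matrix.of (fun i j : Fin (n+1) =>
        if i = j then (1:ℝ)
        else if h : (i : ℕ) < n ∧ (j : ℕ) = n then x ⟨i, h.1⟩ else 0))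
        (Fin.last n) j.castSucc * w j.castSucc = 0 := by
    intro j
    have hne : (Fin.last n) ≠ j.castSucc := by
      intro h; have := congrArg (Fin.val) h
      have := j.isLt; simp [Fin.coe_castSucc, Fin.val_last] at *; omega
    have hlt : ¬ ((Fin.last n : Fin (n+1)) : ℕ) < n := by simp
    simp [hne, hlt]
  rw [Finset.sum_congr rfl (fun j _ => h1 j)]
  simp

/-- If there is `c > 0` such that for all `t > 0` all nonzero vectors of
`a_r(t) V(x) ℤ^{n+1}` have sup-norm at least `c`, then `x` is `r`-badly approximable. -/
theorem stmt_4 (n : ℕ) (hn : 1 ≤ n) (r : Fin n → ℝ)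
    (hr : ∀ i, 0 ≤ r i) (hsum : ∑ i, r i = 1) (x : Fin n → ℝ)
    (c : ℝ) (hc : 0 < c)
    (horb : ∀ t > (0 : ℝ), ∀ v : Fin (n + 1) → ℤ, v ≠ 0 →
      c ≤ ‖(arMat n r t * VMat n x).mulVec fun i => (v i : ℝ)‖) :
    ∃ c' > (0 : ℝ), ∀ (p : Fin n → ℤ) (q : ℤ), q ≠ 0 →
      ∃ i, c' ≤ |(q : ℝ)| ^ (r i) * |(q : ℝ) * x i + (p i : ℝ)| := by
  -- WLOG c ≤ 1
  obtain ⟨c, hc, hc1, horb⟩ :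
      ∃ c > (0:ℝ), c ≤ 1 ∧ ∀ t > (0 : ℝ), ∀ v : Fin (n + 1) → ℤ, v ≠ 0 →
        c ≤ ‖(arMat n r t * VMat n x).mulVec fun i => (v i : ℝ)‖ := by
    exact ⟨min c 1, lt_min hc one_pos, min_le_right _ _,
      fun t ht v hv => (min_le_left _ _).trans (horb t ht v hv)⟩
  refine ⟨c * (c / 2), by positivity, fun p q hq => ?_⟩
  have hq1 : (1:ℝ) ≤ |(q:ℝ)| := by
    have := Int.one_le_abs hq
    exact_mod_cast this
  have hb : (1:ℝ) < 2 * |(q:ℝ)| / c := by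
    rw [lt_div_iff₀ hc]; nlinarith
  have hbpos : (0:ℝ) < 2 * |(q:ℝ)| / c := by linarith
  set t := Real.log (2 * |(q:ℝ)| / c) with ht_def
  have ht : 0 < t := Real.log_pos hb
  have hexp : Real.exp t = 2 * |(q:ℝ)| / c := Real.exp_log hbpos
  set v : Fin (n+1) → ℤ := fun i => if h : (i:ℕ) < n then p ⟨i, h⟩ else q with hv_def
  have hvlast : v (Fin.last n) = q := by simp [hv_def]
  have hv0 : v ≠ 0 := by
    intro h
    have := congrFun h (Fin.last n)
    rw [hvlast] at this; exact hq this
  have hkey := horb t ht v hv0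
  set w : Fin (n+1) → ℝ := (arMat n r t * VMat n x).mulVec fun i => (v i : ℝ) with hw_def
  have hw : ∀ j, w j = (arMat n r t).mulVec ((VMat n x).mulVec fun i => (v i : ℝ)) j := by
    intro j
    rw [hw_def, ← Matrix.mulVec_mulVec]
  have hdiag : ∀ j, (arMat n r t).mulVec ((VMat n x).mulVec fun i => (v i : ℝ)) j
      = (if h : (j : ℕ) < n then Real.exp (r ⟨j, h⟩ * t) else Real.exp (-t)) *
        ((VMat n x).mulVec fun i => (v i : ℝ)) j := by
    intro j
    rw [arMat, Matrix.mulVec_diagonal]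
  have hwlast : w (Fin.last n) = Real.exp (-t) * (q : ℝ) := by
    rw [hw, hdiag, VMat_mulVec_last]
    have : ¬ ((Fin.last n : Fin (n+1)) : ℕ) < n := by simp
    rw [dif_neg this, hvlast]
  have hwi : ∀ i : Fin n, w i.castSucc
      = Real.exp (r i * t) * ((p i : ℝ) + x i * (q : ℝ)) := by
    intro i
    rw [hw, hdiag]
    have h1 : ((i.castSucc : Fin (n+1)) : ℕ) < n := by simpa using i.isLt
    rw [dif_pos h1, VMat_mulVec n x _ i]
    have h3 : (⟨((i.castSucc : Fin (n+1)) : ℕ), h1⟩ : Fin n) = i := Fin.ext (by simp)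
    rw [h3]
    have h2 : v i.castSucc = p i := by
      simp only [hv_def]
      rw [dif_pos h1]
      exact congrArg p h3
    rw [h2, hvlast]
  -- the last coordinate is small
  have hlast_small : |w (Fin.last n)| < c := by
    rw [hwlast]
    have hexpneg : Real.exp (-t) = c / (2 * |(q:ℝ)|) := by
      rw [Real.exp_neg, hexp]
      field_simp
    rw [abs_mul, hexpneg]
    rw [abs_of_pos (by positivity)]
    rw [div_mul_eq_mul_div, div_lt_iff₀ (by positivity)]
    nlinarith
  -- some coordinate is ≥ c
  obtain ⟨j, hj⟩ : ∃ j, c ≤ |w j| := by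
    by_contra h
    push_neg at h
    have : ‖w‖ < c := by
      rw [pi_norm_lt_iff hc]
      intro i
      simpa [Real.norm_eq_abs] using h i
    exact absurd hkey (not_le.mpr this)
  have hjne : j ≠ Fin.last n := by
    intro h; rw [h] at hj; exact absurd hj (not_le.mpr hlast_small)
  obtain ⟨i, rfl⟩ : ∃ i : Fin n, j = i.castSucc := by
    refine ⟨⟨(j:ℕ), ?_⟩, ?_⟩
    · have := j.isLt
      have : (j:ℕ) ≠ n := fun h => hjne (Fin.ext (by simp [h]))
      omega
    · apply Fin.ext; simp
  rw [hwi i, abs_mul, abs_of_pos (Real.exp_pos _)] at hj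
  refine ⟨i, ?_⟩
  have hri : r i ≤ 1 := by
    rw [← hsum]
    exact Finset.single_le_sum (fun j _ => hr j) (Finset.mem_univ i)
  have habs : |(q:ℝ) * x i + (p i : ℝ)| = |(p i : ℝ) + x i * (q:ℝ)| := by
    ring_nf
  rw [habs]
  have hqr : |(q:ℝ)| ^ (r i) = Real.exp (r i * t) * (c / 2) ^ (r i) := by
    have h1 : Real.exp (r i * t) = (2 * |(q:ℝ)| / c) ^ (r i) := by
      rw [mul_comm, Real.exp_mul, hexp]
    rw [h1, ← Real.mul_rpow (le_of_lt hbpos) (by positivity)]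
    congr 1
    field_simp
  rw [hqr]
  have hc2 : c / 2 ≤ (c / 2) ^ (r i) := by
    calc c / 2 = (c / 2) ^ (1:ℝ) := by rw [Real.rpow_one]
    _ ≤ (c / 2) ^ (r i) :=
      Real.rpow_le_rpow_of_exponent_ge (by positivity) (by linarith) hri
  calc c * (c / 2) ≤ (Real.exp (r i * t) * |(p i : ℝ) + x i * (q:ℝ)|) * ((c/2) ^ (r i)) := by
        have h0 : (0:ℝ) < (c/2) ^ (r i) := lt_of_lt_of_le (by positivity) hc2
        have := mul_le_mul hj hc2 (by positivity) (le_trans hc.le hj)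
        nlinarith [Real.exp_pos (r i * t), abs_nonneg ((p i : ℝ) + x i * (q:ℝ))]
    _ = Real.exp (r i * t) * (c / 2) ^ (r i) * |(p i : ℝ) + x i * (q:ℝ)| := by ring
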